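/- Let R = ((ℓ_1,…,ℓ_d),(u_1,…,u_{d+1})) be a constructible special point data of level d with q nodes, and assume u_1, …, u_{d+1} is listed in increasing lexicographic order. Then for every node label ℓ ∈ {1,…,q} and all indices 1 ≤ j₂ ≤ j₁ ≤ d+1 one has 0 ≤ a^ℓ_{u_{j₁}}(R) − a^ℓ_{u_{j₂}}(R) ≤ 1. -/

import Mathlib

/-- The relation `u <_ℓ u'` on `{1,2}^d`, relative to node labels `lab : Fin d → ℕ`. -/
def ltNode {d : ℕ} (lab : Fin d → ℕ) (ℓ : ℕ) (u u' : Fin d → ℕ) : Prop :=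
  (∃ k₀ : Fin d, lab k₀ = ℓ ∧ u k₀ = 2 ∧ u' k₀ = 1 ∧
      ∀ k : Fin d, k₀ < k → lab k = ℓ → u k = u' k) ∨
  ((∀ k : Fin d, lab k = ℓ → u k = u' k) ∧
    ∃ k₀ : Fin d, lab k₀ ≠ ℓ ∧ u k₀ = 1 ∧ u' k₀ = 2 ∧
      ∀ k : Fin d, k < k₀ → u k = u' k)

/-- Constructible special point data of level `d` with `q` nodes. -/
inductive Constructible (q : ℕ) :
    (d : ℕ) → (Fin d → ℕ) → (Fin (d + 1) → Fin d → ℕ) → Prop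
  | base (ℓ : ℕ) (h1 : 1 ≤ ℓ) (hq : ℓ ≤ q) :
      Constructible q 1 (fun _ => ℓ) ![![1], ![2]]
  | step {d : ℕ} {lab : Fin d → ℕ} {u : Fin (d + 1) → Fin d → ℕ}
      (hR : Constructible q d lab u) (ℓ : ℕ) (h1 : 1 ≤ ℓ) (hq : ℓ ≤ q)
      (v : Fin (d + 1) → Fin d → ℕ) (σ : Equiv.Perm (Fin (d + 1)))
      (hv : ∀ j, v j = u (σ j))
      (hsort : ∀ i j : Fin (d + 1), i < j → ltNode lab ℓ (v i) (v j))
      (h : ℕ) (hh1 : 1 ≤ h) (hh2 : h ≤ d + 1) :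
      Constructible q (d + 1) (Fin.snoc lab ℓ)
        (fun j : Fin (d + 2) =>
          if hj : (j : ℕ) < h then Fin.snoc (v ⟨(j : ℕ), by omega⟩) 1
          else Fin.snoc (v ⟨(j : ℕ) - 1, by omega⟩) 2)

/-- `a^ℓ_u(R)`: the number of `k` with `ℓ_k = ℓ` and `u(k) = 2`. -/
def aCount {d : ℕ} (lab : Fin d → ℕ) (ℓ : ℕ) (u : Fin d → ℕ) : ℕ :=
  (Finset.univ.filter (fun k : Fin d => lab k = ℓ ∧ u k = 2)).card

/-- `|a_u(R)|`: the number of `k` with `u(k) = 2`. -/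
def aTot {d : ℕ} (u : Fin d → ℕ) : ℕ :=
  (Finset.univ.filter (fun k : Fin d => u k = 2)).card

/-- Lexicographic order on tuples, comparing at the smallest coordinate where they differ. -/
def lexLt {d : ℕ} (u u' : Fin d → ℕ) : Prop :=
  ∃ k₀ : Fin d, (∀ k : Fin d, k < k₀ → u k = u' k) ∧ u k₀ < u' k₀

lemma lexLt_irrefl {d : ℕ} (x : Fin d → ℕ) : ¬ lexLt x x := by
  rintro ⟨k₀, -, hk⟩; omega

lemma ltNode_irrefl {d : ℕ} (lab : Fin d → ℕ) (ℓ : ℕ) (x : Fin d → ℕ) :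
    ¬ ltNode lab ℓ x x := by
  rintro (⟨k₀, -, h2, h1, -⟩ | ⟨-, k₀, -, h1, h2, -⟩) <;> omega

lemma aCount_snoc {d : ℕ} (lab : Fin d → ℕ) (ℓ' ℓ : ℕ) (x : Fin d → ℕ) (ε : ℕ) :
    aCount (Fin.snoc lab ℓ') ℓ (Fin.snoc x ε) =
      aCount lab ℓ x + (if ℓ' = ℓ ∧ ε = 2 then 1 else 0) := by
  simp only [aCount, Finset.card_filter, Fin.sum_univ_castSucc, Fin.snoc_castSucc,
    Fin.snoc_last]

lemma lexLt_snoc_elim {d : ℕ} {x y : Fin d → ℕ} {ε δ : ℕ}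
    (hl : lexLt (Fin.snoc x ε) (Fin.snoc y δ)) : lexLt x y ∨ (x = y ∧ ε < δ) := by
  obtain ⟨k₀, hbef, hk⟩ := hl
  rcases Nat.lt_or_ge k₀.val d with hkd | hkd
  · left
    refine ⟨⟨k₀.val, hkd⟩, fun k hkk => ?_, ?_⟩
    · have h2 := hbef k.castSucc (by simpa [Fin.lt_def] using hkk)
      rwa [Fin.snoc_castSucc, Fin.snoc_castSucc] at h2
    · have : k₀ = Fin.castSucc ⟨k₀.val, hkd⟩ := by ext; rfl
      rw [this, Fin.snoc_castSucc, Fin.snoc_castSucc] at hk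
      exact hk
  · right
    have hlast : k₀ = Fin.last d := by ext; simp; omega
    constructor
    · funext k
      have h2 := hbef k.castSucc (by rw [hlast]; exact Fin.castSucc_lt_last k)
      rwa [Fin.snoc_castSucc, Fin.snoc_castSucc] at h2
    · rw [hlast, Fin.snoc_last, Fin.snoc_last] at hk; exact hk

lemma ltNode_snoc_elim {d : ℕ} {lab : Fin d → ℕ} {ℓ' ℓ : ℕ} {x y : Fin d → ℕ} {ε δ : ℕ}
    (hn : ltNode (Fin.snoc lab ℓ') ℓ (Fin.snoc x ε) (Fin.snoc y δ)) :
    (ltNode lab ℓ x y ∧ (ℓ' = ℓ → ε = δ)) ∨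
    (ℓ' = ℓ ∧ ε = 2 ∧ δ = 1) ∨
    (x = y ∧ ℓ' ≠ ℓ ∧ ε = 1 ∧ δ = 2) := by
  rcases hn with ⟨k₀, hlab, hx2, hy1, hafter⟩ | ⟨hagree, k₀, hlab, hx1, hy2, hbefore⟩
  · rcases Nat.lt_or_ge k₀.val d with hkd | hkd
    · have hcast : k₀ = Fin.castSucc ⟨k₀.val, hkd⟩ := by ext; rfl
      rw [hcast, Fin.snoc_castSucc] at hlab hx2 hy1
      left
      constructor
      · left
        refine ⟨⟨k₀.val, hkd⟩, hlab, hx2, hy1, fun k hkk hlk => ?_⟩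
        have h2 := hafter k.castSucc (by rw [hcast]; exact Fin.castSucc_lt_castSucc_iff.2 hkk)
          (by rwa [Fin.snoc_castSucc])
        rwa [Fin.snoc_castSucc, Fin.snoc_castSucc] at h2
      · intro hll
        have h2 := hafter (Fin.last d) (by rw [hcast]; exact Fin.castSucc_lt_last _)
          (by rwa [Fin.snoc_last])
        rwa [Fin.snoc_last, Fin.snoc_last] at h2
    · have hlast : k₀ = Fin.last d := by ext; simp; omega
      rw [hlast, Fin.snoc_last] at hlab hx2 hy1
      exact Or.inr (Or.inl ⟨hlab, hx2, hy1⟩)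
  · rcases Nat.lt_or_ge k₀.val d with hkd | hkd
    · have hcast : k₀ = Fin.castSucc ⟨k₀.val, hkd⟩ := by ext; rfl
      rw [hcast, Fin.snoc_castSucc] at hlab hx1 hy2
      left
      constructor
      · right
        refine ⟨fun k hlk => ?_, ⟨k₀.val, hkd⟩, hlab, hx1, hy2, fun k hkk => ?_⟩
        · have h2 := hagree k.castSucc (by rwa [Fin.snoc_castSucc])
          rwa [Fin.snoc_castSucc, Fin.snoc_castSucc] at h2
        · have h2 := hbefore k.castSucc (by rw [hcast]; exact Fin.castSucc_lt_castSucc_iff.2 hkk)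
          rwa [Fin.snoc_castSucc, Fin.snoc_castSucc] at h2
      · intro hll
        have h2 := hagree (Fin.last d) (by rwa [Fin.snoc_last])
        rwa [Fin.snoc_last, Fin.snoc_last] at h2
    · have hlast : k₀ = Fin.last d := by ext; simp; omega
      rw [hlast, Fin.snoc_last] at hlab hx1 hy2
      refine Or.inr (Or.inr ⟨funext fun k => ?_, fun hc => hlab hc, hx1, hy2⟩)
      have h2 := hbefore k.castSucc (by rw [hlast]; exact Fin.castSucc_lt_last k)
      rwa [Fin.snoc_castSucc, Fin.snoc_castSucc] at h2

theorem constructible_invariants {q d : ℕ} {lab : Fin d → ℕ}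
    {u : Fin (d + 1) → Fin d → ℕ} (hR : Constructible q d lab u) :
    ∀ (ℓ : ℕ) (i j : Fin (d + 1)),
      (aCount lab ℓ (u i) ≤ aCount lab ℓ (u j) + 1) ∧
      (lexLt (u i) (u j) → aCount lab ℓ (u i) ≤ aCount lab ℓ (u j)) ∧
      (ltNode lab ℓ (u i) (u j) → aCount lab ℓ (u j) ≤ aCount lab ℓ (u i)) ∧
      (ltNode lab ℓ (u i) (u j) → lexLt (u j) (u i) →
        aCount lab ℓ (u j) + 1 ≤ aCount lab ℓ (u i)) := by
  induction hR with
  | base ℓ₀ h1 hq =>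
    intro ℓ i j
    have ha : ∀ x : Fin 1 → ℕ, aCount (fun _ => ℓ₀) ℓ x
        = if ℓ₀ = ℓ ∧ x 0 = 2 then 1 else 0 := by
      intro x; simp only [aCount, Finset.card_filter, Fin.sum_univ_one]
    have hlx : ∀ x y : Fin 1 → ℕ, lexLt x y → x 0 < y 0 := by
      rintro x y ⟨k₀, -, hk⟩
      have h0 : k₀ = 0 := Subsingleton.elim _ _
      rwa [h0] at hk
    have hnd : ∀ x y : Fin 1 → ℕ, ltNode (fun _ => ℓ₀) ℓ x y →
        (ℓ₀ = ℓ ∧ x 0 = 2 ∧ y 0 = 1) ∨ (ℓ₀ ≠ ℓ ∧ x 0 = 1 ∧ y 0 = 2) := by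
      rintro x y (⟨k₀, ha1, ha2, ha3, -⟩ | ⟨h0, k₀, ha1, ha2, ha3, -⟩)
      · have hk : k₀ = 0 := Subsingleton.elim _ _
        rw [hk] at ha2 ha3; exact Or.inl ⟨ha1, ha2, ha3⟩
      · have hk : k₀ = 0 := Subsingleton.elim _ _
        rw [hk] at ha2 ha3; exact Or.inr ⟨ha1, ha2, ha3⟩
    fin_cases i <;> fin_cases j <;>
      simp only [Fin.zero_eta, Fin.mk_one, Matrix.cons_val_zero, Matrix.cons_val_one,
        Matrix.head_cons] <;>
      refine ⟨?_, fun hl => ?_, fun hn => ?_, fun hn hl => ?_⟩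
    · simp only [ha, Matrix.cons_val_zero]; split_ifs <;> first | omega | tauto
    · exact absurd hl (lexLt_irrefl _)
    · exact le_rfl
    · exact absurd hl (lexLt_irrefl _)
    · simp only [ha, Matrix.cons_val_zero, and_true]; by_cases hc : ℓ₀ = ℓ <;> simp [hc]
    · simp only [ha, Matrix.cons_val_zero, and_true]; by_cases hc : ℓ₀ = ℓ <;> simp [hc]
    · rcases hnd _ _ hn with ⟨-, hB, -⟩ | ⟨hA, -, -⟩
      · simp at hB
      · simp only [ha, Matrix.cons_val_zero]; split_ifs <;> first | omega | tauto
    · have hx := hlx _ _ hl; simp at hx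
    · simp only [ha, Matrix.cons_val_zero]; split_ifs <;> first | omega | tauto
    · have hx := hlx _ _ hl; simp at hx
    · simp only [ha, Matrix.cons_val_zero, and_true]; by_cases hc : ℓ₀ = ℓ <;> simp [hc]
    · rcases hnd _ _ hn with ⟨hA, -, -⟩ | ⟨-, hB, -⟩
      · simp only [ha, Matrix.cons_val_zero, and_true]; simp [hA]
      · simp at hB
    · simp only [ha, Matrix.cons_val_zero]; split_ifs <;> first | omega | tauto
    · exact absurd hl (lexLt_irrefl _)
    · exact le_rfl
    · exact absurd hl (lexLt_irrefl _)
  | step hR ℓ' hℓ'1 hℓ'q v σ hv hsort h hh1 hh2 ih =>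
    rename_i d0 lab0 u0
    intro ℓ i j
    have ihv : ∀ (ℓ : ℕ) (p r : Fin (d0 + 1)),
        (aCount lab0 ℓ (v p) ≤ aCount lab0 ℓ (v r) + 1) ∧
        (lexLt (v p) (v r) → aCount lab0 ℓ (v p) ≤ aCount lab0 ℓ (v r)) ∧
        (ltNode lab0 ℓ (v p) (v r) → aCount lab0 ℓ (v r) ≤ aCount lab0 ℓ (v p)) ∧
        (ltNode lab0 ℓ (v p) (v r) → lexLt (v r) (v p) →
          aCount lab0 ℓ (v r) + 1 ≤ aCount lab0 ℓ (v p)) := by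
      intro ℓ p r
      have h0 := ih ℓ (σ p) (σ r)
      rwa [← hv p, ← hv r] at h0
    have main : ∀ (p r : Fin (d0 + 1)) (ε δ : ℕ), (ε = 1 ∨ ε = 2) → (δ = 1 ∨ δ = 2) →
        (ε = 2 → δ = 1 → (v p = v r ∨ ltNode lab0 ℓ' (v r) (v p))) →
        (aCount (Fin.snoc lab0 ℓ') ℓ (Fin.snoc (v p) ε)
            ≤ aCount (Fin.snoc lab0 ℓ') ℓ (Fin.snoc (v r) δ) + 1) ∧
        (lexLt (Fin.snoc (v p) ε) (Fin.snoc (v r) δ) →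
          aCount (Fin.snoc lab0 ℓ') ℓ (Fin.snoc (v p) ε)
            ≤ aCount (Fin.snoc lab0 ℓ') ℓ (Fin.snoc (v r) δ)) ∧
        (ltNode (Fin.snoc lab0 ℓ') ℓ (Fin.snoc (v p) ε) (Fin.snoc (v r) δ) →
          aCount (Fin.snoc lab0 ℓ') ℓ (Fin.snoc (v r) δ)
            ≤ aCount (Fin.snoc lab0 ℓ') ℓ (Fin.snoc (v p) ε)) ∧
        (ltNode (Fin.snoc lab0 ℓ') ℓ (Fin.snoc (v p) ε) (Fin.snoc (v r) δ) →
          lexLt (Fin.snoc (v r) δ) (Fin.snoc (v p) ε) →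
          aCount (Fin.snoc lab0 ℓ') ℓ (Fin.snoc (v r) δ) + 1
            ≤ aCount (Fin.snoc lab0 ℓ') ℓ (Fin.snoc (v p) ε)) := by
      intro p r ε δ hε hδ hF
      obtain ⟨hI2, hI1, hI3, hI4⟩ := ihv ℓ p r
      obtain ⟨hI2', hI1', hI3', hI4'⟩ := ihv ℓ r p
      rw [aCount_snoc, aCount_snoc]
      refine ⟨?_, fun hl => ?_, fun hn => ?_, fun hn hl => ?_⟩
      · have hc : ℓ' = ℓ → ε = 2 → ¬(δ = 2) →
            aCount lab0 ℓ (v p) ≤ aCount lab0 ℓ (v r) := by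
          intro hll he hd2
          have hδ1 : δ = 1 := by rcases hδ with h0 | h0; exacts [h0, absurd h0 hd2]
          rcases hF he hδ1 with heq | hlt
          · exact le_of_eq (congrArg _ heq)
          · exact hI3' (by rwa [hll] at hlt)
        rcases em (ℓ' = ℓ ∧ ε = 2) with hA | hA <;> rcases em (ℓ' = ℓ ∧ δ = 2) with hB | hB
        · rw [if_pos hA, if_pos hB]; omega
        · rw [if_pos hA, if_neg hB]
          have := hc hA.1 hA.2 (fun hd => hB ⟨hA.1, hd⟩); omega
        · rw [if_neg hA, if_pos hB]; omega
        · rw [if_neg hA, if_neg hB]; omega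
      · rcases lexLt_snoc_elim hl with hxy | ⟨heq, hed⟩
        · have hab := hI1 hxy
          have hc : ℓ' = ℓ → ε = 2 → ¬(δ = 2) →
              aCount lab0 ℓ (v p) + 1 ≤ aCount lab0 ℓ (v r) := by
            intro hll he hd2
            have hδ1 : δ = 1 := by rcases hδ with h0 | h0; exacts [h0, absurd h0 hd2]
            rcases hF he hδ1 with heq | hlt
            · rw [heq] at hxy; exact absurd hxy (lexLt_irrefl _)
            · exact hI4' (by rwa [hll] at hlt) hxy
          rcases em (ℓ' = ℓ ∧ ε = 2) with hA | hA <;> rcases em (ℓ' = ℓ ∧ δ = 2) with hB | hB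
          · rw [if_pos hA, if_pos hB]; omega
          · rw [if_pos hA, if_neg hB]
            have := hc hA.1 hA.2 (fun hd => hB ⟨hA.1, hd⟩); omega
          · rw [if_neg hA, if_pos hB]; omega
          · rw [if_neg hA, if_neg hB]; omega
        · have hε1 : ε = 1 := by
            rcases hε with h0 | h0
            · exact h0
            · rcases hδ with h1 | h1 <;> omega
          rw [heq, if_neg (by rintro ⟨-, h2⟩; omega : ¬(ℓ' = ℓ ∧ ε = 2))]
          rcases em (ℓ' = ℓ ∧ δ = 2) with hB | hB
          · rw [if_pos hB]; omega
          · rw [if_neg hB]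
      · rcases ltNode_snoc_elim hn with ⟨hold, himp⟩ | ⟨hll, he2, hd1⟩ | ⟨heq, hll, -, -⟩
        · have hba := hI3 hold
          have hiff : (ℓ' = ℓ ∧ δ = 2) ↔ (ℓ' = ℓ ∧ ε = 2) := by
            constructor
            · rintro ⟨hll, hd⟩; exact ⟨hll, by rw [himp hll]; exact hd⟩
            · rintro ⟨hll, he⟩; exact ⟨hll, by rw [← himp hll]; exact he⟩
          rcases em (ℓ' = ℓ ∧ ε = 2) with hA | hA
          · rw [if_pos hA, if_pos (hiff.2 hA)]; omega
          · rw [if_neg hA, if_neg (show ¬(ℓ' = ℓ ∧ δ = 2) from fun hc => hA (hiff.1 hc))]; omega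
        · rw [if_neg (by rintro ⟨-, h2⟩; omega : ¬(ℓ' = ℓ ∧ δ = 2)),
            if_pos (show ℓ' = ℓ ∧ ε = 2 from ⟨hll, he2⟩)]
          omega
        · rw [heq, if_neg (show ¬(ℓ' = ℓ ∧ δ = 2) from fun hc => hll hc.1),
            if_neg (show ¬(ℓ' = ℓ ∧ ε = 2) from fun hc => hll hc.1)]
      · rcases ltNode_snoc_elim hn with ⟨hold, himp⟩ | ⟨hll, he2, hd1⟩ | ⟨heq, hll, he1, hd2⟩
        · rcases lexLt_snoc_elim hl with hyx | ⟨heq, hde⟩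
          · have h4 := hI4 hold hyx
            have hiff : (ℓ' = ℓ ∧ δ = 2) ↔ (ℓ' = ℓ ∧ ε = 2) := by
              constructor
              · rintro ⟨hll, hd⟩; exact ⟨hll, by rw [himp hll]; exact hd⟩
              · rintro ⟨hll, he⟩; exact ⟨hll, by rw [← himp hll]; exact he⟩
            rcases em (ℓ' = ℓ ∧ ε = 2) with hA | hA
            · rw [if_pos hA, if_pos (hiff.2 hA)]; omega
            · rw [if_neg hA, if_neg (show ¬(ℓ' = ℓ ∧ δ = 2) from fun hc => hA (hiff.1 hc))]; omega
          · rw [heq] at hold; exact absurd hold (ltNode_irrefl _ _ _)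
        · have hba : aCount lab0 ℓ (v r) ≤ aCount lab0 ℓ (v p) := by
            rcases lexLt_snoc_elim hl with hyx | ⟨heq, -⟩
            · exact hI1' hyx
            · exact le_of_eq (congrArg _ heq)
          rw [if_neg (by rintro ⟨-, h2⟩; omega : ¬(ℓ' = ℓ ∧ δ = 2)),
            if_pos (show ℓ' = ℓ ∧ ε = 2 from ⟨hll, he2⟩)]
          omega
        · rcases lexLt_snoc_elim hl with hyx | ⟨-, hde⟩
          · rw [heq] at hyx; exact absurd hyx (lexLt_irrefl _)
          · exact absurd hde (by omega)
    rcases Nat.lt_or_ge (i : ℕ) h with hi | hi <;> rcases Nat.lt_or_ge (j : ℕ) h with hj | hj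
    · simp only [dif_pos hi, dif_pos hj]
      exact main ⟨(i : ℕ), by omega⟩ ⟨(j : ℕ), by omega⟩ 1 1 (Or.inl rfl) (Or.inl rfl)
        (fun h12 _ => absurd h12 (by norm_num))
    · simp only [dif_pos hi, dif_neg (by omega : ¬ (j : ℕ) < h)]
      exact main ⟨(i : ℕ), by omega⟩ ⟨(j : ℕ) - 1, by omega⟩ 1 2 (Or.inl rfl) (Or.inr rfl)
        (fun h12 _ => absurd h12 (by norm_num))
    · simp only [dif_neg (by omega : ¬ (i : ℕ) < h), dif_pos hj]
      refine main ⟨(i : ℕ) - 1, by omega⟩ ⟨(j : ℕ), by omega⟩ 2 1 (Or.inr rfl) (Or.inl rfl) ?_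
      intro _ _
      rcases Nat.lt_or_ge (j : ℕ) ((i : ℕ) - 1) with hlt | hge
      · exact Or.inr (hsort _ _ (Fin.mk_lt_mk.mpr hlt))
      · exact Or.inl (congrArg v (Fin.mk_eq_mk.mpr (by omega)))
    · simp only [dif_neg (by omega : ¬ (i : ℕ) < h), dif_neg (by omega : ¬ (j : ℕ) < h)]
      exact main ⟨(i : ℕ) - 1, by omega⟩ ⟨(j : ℕ) - 1, by omega⟩ 2 2 (Or.inr rfl) (Or.inr rfl)
        (fun _ h21 => absurd h21 (by norm_num))

/-- If the tuples of a constructible special point data are listed in increasing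
lexicographic order, then `0 ≤ a^ℓ_{u_{j₁}}(R) − a^ℓ_{u_{j₂}}(R) ≤ 1` whenever
`j₂ ≤ j₁`. -/
theorem constructible_aCount_diff {q d : ℕ} (hq : 1 ≤ q) (hd : 1 ≤ d)
    {lab : Fin d → ℕ} {u : Fin (d + 1) → Fin d → ℕ}
    (hR : Constructible q d lab u)
    (hlex : ∀ i j : Fin (d + 1), i < j → lexLt (u i) (u j))
    (ℓ : ℕ) (hℓ1 : 1 ≤ ℓ) (hℓq : ℓ ≤ q) :
    ∀ j₁ j₂ : Fin (d + 1), j₂ ≤ j₁ →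
      0 ≤ (aCount lab ℓ (u j₁) : ℤ) - (aCount lab ℓ (u j₂) : ℤ) ∧
      (aCount lab ℓ (u j₁) : ℤ) - (aCount lab ℓ (u j₂) : ℤ) ≤ 1 := by
  intro j₁ j₂ hle
  have h2 := (constructible_invariants hR ℓ j₁ j₂).1
  have hmono : aCount lab ℓ (u j₂) ≤ aCount lab ℓ (u j₁) := by
    rcases eq_or_lt_of_le hle with heq | hlt
    · rw [heq]
    · exact (constructible_invariants hR ℓ j₂ j₁).2.1 (hlex _ _ hlt)
  constructor <;> omega
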